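/- For every integer k ≥ 0, the real vector space of triples (P₁, P₂, P₃) ∈ 𝒫_{k−1}³ for which there exists q ∈ 𝒫_k with Σ_{j=1}^{3} ∂_{x_j}(x_j P_i) = ∂_{x_i} q for i = 1, 2, 3 (where (x₁, x₂, x₃) = (x, y, z)) has dimension (k³ + 6k² + 11k)/6, which equals dim 𝒫_k − 1. -/

import Mathlib

open MvPolynomial

noncomputable section

/-- Real polynomials in the three variables `x, y, z` (indexed `0, 1, 2`). -/
abbrev P3 := MvPolynomial (Fin 3) ℝ

/-- The space `𝒫_m` of polynomials of total degree at most `m`, with the convention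
`𝒫_m = {0}` for `m < 0`. -/
def polyLE3 (m : ℤ) : Submodule ℝ P3 :=
  if 0 ≤ m then restrictTotalDegree (Fin 3) ℝ m.toNat else ⊥

/-- The row-wise divergence of the matrix `M(P₁,P₂,P₃)` with entries `M i j = x_j * P i`:
its `i`-th component is `Σ_j ∂_{x_j} (x_j P_i)`. -/
def rowDiv (P : Fin 3 → P3) : Fin 3 → P3 := fun i => ∑ j : Fin 3, pderiv j (X j * P i)

lemma rowDiv_add (P Q : Fin 3 → P3) : rowDiv (P + Q) = rowDiv P + rowDiv Q := by
  funext i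
  simp [rowDiv, mul_add, Finset.sum_add_distrib]

lemma rowDiv_smul (c : ℝ) (P : Fin 3 → P3) : rowDiv (c • P) = c • rowDiv P := by
  funext i
  simp [rowDiv, mul_smul_comm, Finset.smul_sum]

/-- The space of triples `(P₁,P₂,P₃) ∈ 𝒫_{k-1}³` whose row-wise divergence (of the
associated matrix `M(P₁,P₂,P₃)`) is the gradient of some polynomial `q ∈ 𝒫_k`. -/
def gradDivTriples (k : ℕ) : Submodule ℝ (Fin 3 → P3) where
  carrier := {P | (∀ i, P i ∈ polyLE3 ((k : ℤ) - 1)) ∧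
    ∃ q ∈ polyLE3 (k : ℤ), ∀ i, rowDiv P i = pderiv i q}
  add_mem' := by
    rintro P Q ⟨hP, q1, hq1, hd1⟩ ⟨hQ, q2, hq2, hd2⟩
    refine ⟨fun i => Submodule.add_mem _ (hP i) (hQ i),
      q1 + q2, Submodule.add_mem _ hq1 hq2, fun i => ?_⟩
    rw [rowDiv_add]
    simp [hd1 i, hd2 i]
  zero_mem' := by
    refine ⟨fun i => Submodule.zero_mem _, 0, Submodule.zero_mem _, fun i => ?_⟩
    simp [rowDiv]
  smul_mem' := by
    rintro c P ⟨hP, q1, hq1, hd1⟩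
    refine ⟨fun i => Submodule.smul_mem _ c (hP i),
      c • q1, Submodule.smul_mem _ c hq1, fun i => ?_⟩
    rw [rowDiv_smul]
    simp [hd1 i]

namespace AuxGrad

abbrev dsum (d : Fin 3 →₀ ℕ) : ℕ := d.sum fun _ e => e

def Lmap : P3 →ₗ[ℝ] P3 :=
  (Finsupp.lsum ℝ fun d => ((dsum d : ℝ) + 3) • (monomial d : ℝ →ₗ[ℝ] P3))
    ∘ₗ (AddMonoidAlgebra.coeffLinearEquiv ℝ).toLinearMap

def Linv : P3 →ₗ[ℝ] P3 :=
  (Finsupp.lsum ℝ fun d => ((dsum d : ℝ) + 3)⁻¹ • (monomial d : ℝ →ₗ[ℝ] P3))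
    ∘ₗ (AddMonoidAlgebra.coeffLinearEquiv ℝ).toLinearMap

lemma dsum_eq_sum (d : Fin 3 →₀ ℕ) : dsum d = ∑ x : Fin 3, d x :=
  Finsupp.sum_fintype _ _ (fun _ => rfl)

lemma dsum_cast (d : Fin 3 →₀ ℕ) : (dsum d : ℝ) = ∑ x : Fin 3, (d x : ℝ) := by
  rw [dsum_eq_sum, Nat.cast_sum]

lemma dsum_pos_r (d : Fin 3 →₀ ℕ) : ((dsum d : ℝ) + 3) ≠ 0 := by positivity

lemma Lmap_monomial (d : Fin 3 →₀ ℕ) (c : ℝ) :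
    Lmap (monomial d c) = ((dsum d : ℝ) + 3) • monomial d c := by
  rw [← single_eq_monomial, Lmap]
  rw [LinearMap.comp_apply]
  erw [Finsupp.lsum_single]
  simp [single_eq_monomial]

lemma Linv_monomial (d : Fin 3 →₀ ℕ) (c : ℝ) :
    Linv (monomial d c) = ((dsum d : ℝ) + 3)⁻¹ • monomial d c := by
  rw [← single_eq_monomial, Linv]
  rw [LinearMap.comp_apply]
  erw [Finsupp.lsum_single]
  simp [single_eq_monomial]

lemma Lmap_Linv (p : P3) : Lmap (Linv p) = p := by
  have : Lmap ∘ₗ Linv = LinearMap.id := by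
    ext d : 1
    refine LinearMap.ext fun c => ?_
    simp only [LinearMap.comp_apply, AddMonoidAlgebra.lsingle_apply, single_eq_monomial]
    simp only [LinearMap.comp_apply, Linv_monomial, map_smul, Lmap_monomial,
      LinearMap.id_comp, smul_smul, LinearMap.id_apply]
    rw [inv_mul_cancel₀ (dsum_pos_r d), one_smul]
  exact congrArg (fun f => f p) this

lemma Linv_Lmap (p : P3) : Linv (Lmap p) = p := by
  have : Linv ∘ₗ Lmap = LinearMap.id := by
    ext d : 1
    refine LinearMap.ext fun c => ?_
    simp only [LinearMap.comp_apply, AddMonoidAlgebra.lsingle_apply, single_eq_monomial]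
    simp only [LinearMap.comp_apply, Linv_monomial, map_smul, Lmap_monomial,
      LinearMap.id_comp, smul_smul, LinearMap.id_apply]
    rw [mul_inv_cancel₀ (dsum_pos_r d), one_smul]
  exact congrArg (fun f => f p) this

lemma coeff_Linv (p : P3) (d : Fin 3 →₀ ℕ) :
    coeff d (Linv p) = ((dsum d : ℝ) + 3)⁻¹ * coeff d p := by
  have : (lcoeff ℝ d) ∘ₗ Linv = ((dsum d : ℝ) + 3)⁻¹ • lcoeff ℝ d := by
    ext e : 1
    refine LinearMap.ext fun c => ?_
    simp only [LinearMap.comp_apply, AddMonoidAlgebra.lsingle_apply, single_eq_monomial]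
    by_cases h : e = d
    · subst h; simp [Linv_monomial]
    · simp [Linv_monomial, coeff_monomial, h]
  exact congrArg (fun f => f p) this

lemma Lmap_eq_rowform (p : P3) : Lmap p = ∑ j : Fin 3, pderiv j (X j * p) := by
  have hD : Lmap = ∑ j : Fin 3,
      (pderiv j : Derivation ℝ P3 P3).toLinearMap ∘ₗ (LinearMap.mulLeft ℝ (X j)) := by
    ext d : 1
    refine LinearMap.ext fun c => ?_
    simp only [LinearMap.comp_apply, AddMonoidAlgebra.lsingle_apply, single_eq_monomial]
    simp only [LinearMap.comp_apply, Lmap_monomial, LinearMap.sum_apply,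
      LinearMap.coe_comp, Function.comp_apply, LinearMap.mulLeft_apply,
      Derivation.coeFn_coe]
    have h1 : ∀ j : Fin 3, (X j * monomial d c : P3) = monomial (d + Finsupp.single j 1) c := by
      intro j
      rw [X, monomial_mul, one_mul, add_comm]
    have h2 : ∀ j : Fin 3, pderiv j (monomial (d + Finsupp.single j 1) c)
        = monomial d (c * (d j + 1)) := by
      intro j
      rw [pderiv_monomial]
      congr 1
      · simp
      · simp
    rw [Finset.sum_congr rfl fun j _ => by rw [h1 j, h2 j]]
    rw [← map_sum (monomial d)]
    rw [smul_monomial]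
    congr 1
    have h3 : ∑ x : Fin 3, c * ((d x : ℝ) + 1) = (∑ x : Fin 3, (d x : ℝ)) * c + 3 * c := by
      simp only [mul_add, mul_one, Finset.sum_add_distrib, Finset.sum_mul]
      simp [mul_comm]
    rw [h3, smul_eq_mul, dsum_cast]
    ring
  rw [hD]
  simp

lemma coeff_pderiv (i : Fin 3) (p : P3) (m : Fin 3 →₀ ℕ) :
    coeff m (pderiv i p) = ((m i : ℝ) + 1) * coeff (m + Finsupp.single i 1) p := by
  have key : (lcoeff ℝ m) ∘ₗ (pderiv i : Derivation ℝ P3 P3).toLinearMap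
      = ((m i : ℝ) + 1) • lcoeff ℝ (m + Finsupp.single i 1) := by
    ext d : 1
    refine LinearMap.ext fun c => ?_
    simp only [LinearMap.comp_apply, AddMonoidAlgebra.lsingle_apply, single_eq_monomial]
    simp only [LinearMap.comp_apply, Derivation.coeFn_coe, LinearMap.smul_apply,
      lcoeff_apply, pderiv_monomial, smul_eq_mul]
    by_cases h : d = m + Finsupp.single i 1
    · subst h
      have h1 : (m + Finsupp.single i 1) - Finsupp.single i 1 = m := by simp
      have h2 : (m + Finsupp.single i 1 : Fin 3 →₀ ℕ) i = m i + 1 := by simp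
      rw [h1, h2, coeff_monomial, coeff_monomial, if_pos rfl, if_pos rfl]
      push_cast
      ring
    · rw [coeff_monomial, coeff_monomial, if_neg h, mul_zero]
      by_cases hdi : d i = 0
      · split
        · simp [hdi]
        · rfl
      · rw [if_neg]
        intro hc
        apply h
        rw [← hc, tsub_add_cancel_of_le]
        rw [Finsupp.single_le_iff]
        omega
  exact congrArg (fun f => f p) key

lemma dsum_add_single (d : Fin 3 →₀ ℕ) (i : Fin 3) :
    dsum (d + Finsupp.single i 1) = dsum d + 1 := by
  rw [dsum, Finsupp.sum_add_index' (fun _ => rfl) (fun _ _ _ => rfl)]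
  simp [dsum]

lemma mem_rtd (p : P3) (m : ℕ) :
    p ∈ restrictTotalDegree (Fin 3) ℝ m ↔ ∀ d ∈ p.support, dsum d ≤ m := by
  rw [restrictTotalDegree, restrictSupport, AddMonoidAlgebra.mem_supported]
  constructor
  · exact fun h d hd => h hd
  · exact fun h d hd => h d hd

lemma pderiv_mem {q : P3} {m : ℕ} (i : Fin 3)
    (hq : q ∈ restrictTotalDegree (Fin 3) ℝ (m + 1)) :
    pderiv i q ∈ restrictTotalDegree (Fin 3) ℝ m := by
  rw [mem_rtd] at hq ⊢
  intro d hd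
  rw [mem_support_iff, coeff_pderiv] at hd
  have h2 : coeff (d + Finsupp.single i 1) q ≠ 0 := by
    intro h0
    rw [h0, mul_zero] at hd
    exact hd rfl
  have := hq _ (mem_support_iff.mpr h2)
  rw [dsum_add_single] at this
  omega

lemma Linv_mem {p : P3} {m : ℕ} (hp : p ∈ restrictTotalDegree (Fin 3) ℝ m) :
    Linv p ∈ restrictTotalDegree (Fin 3) ℝ m := by
  rw [mem_rtd] at hp ⊢
  intro d hd
  rw [mem_support_iff, coeff_Linv] at hd
  have h2 : coeff d p ≠ 0 := by
    intro h0
    rw [h0, mul_zero] at hd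
    exact hd rfl
  exact hp _ (mem_support_iff.mpr h2)

lemma eq_C_of_pderiv_eq_zero {q : P3} (h : ∀ i, pderiv i q = 0) :
    q = C (coeff 0 q) := by
  ext e
  rw [coeff_C]
  by_cases he : (0 : Fin 3 →₀ ℕ) = e
  · rw [if_pos he, ← he]
  · rw [if_neg he]
    have hne : e ≠ 0 := fun hc => he hc.symm
    obtain ⟨i, hi⟩ : ∃ i, e i ≠ 0 := by
      by_contra hall
      push_neg at hall
      exact hne (Finsupp.ext fun a => hall a)
    have key := coeff_pderiv i q (e - Finsupp.single i 1)
    rw [h i] at key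
    have hre : (e - Finsupp.single i 1) + Finsupp.single i 1 = e := by
      rw [tsub_add_cancel_of_le]
      rw [Finsupp.single_le_iff]
      omega
    rw [hre] at key
    have hfac : (((e - Finsupp.single i 1 : Fin 3 →₀ ℕ) i : ℝ)) + 1 ≠ 0 := by positivity
    have : (((e - Finsupp.single i 1 : Fin 3 →₀ ℕ) i : ℝ) + 1) * coeff e q = 0 := by
      rw [← key, coeff_zero]
    exact (mul_eq_zero.mp this).resolve_left hfac

lemma two_choose (n : ℕ) : 2 * (n + 2).choose 2 = (n + 1) * (n + 2) := by
  induction n with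
  | zero => rfl
  | succ n ih =>
    have h : (n + 3).choose 2 = (n + 2).choose 1 + (n + 2).choose 2 :=
      Nat.choose_succ_succ' (n + 2) 1
    rw [show n + 1 + 2 = n + 3 from rfl, h, Nat.choose_one_right, Nat.mul_add, ih]
    ring

lemma six_choose (n : ℕ) : 6 * (n + 3).choose 3 = (n + 1) * (n + 2) * (n + 3) := by
  induction n with
  | zero => rfl
  | succ n ih =>
    have h : (n + 4).choose 3 = (n + 3).choose 2 + (n + 3).choose 3 :=
      Nat.choose_succ_succ' (n + 3) 2
    have h2 := two_choose (n + 1)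
    rw [show n + 1 + 2 = n + 3 from rfl] at h2
    rw [show n + 1 + 3 = n + 4 from rfl, h, Nat.mul_add]
    rw [show 6 * (n + 3).choose 2 = 3 * (2 * (n + 3).choose 2) by ring, h2, ih]
    ring

/-- stars and bars count -/
lemma card_deg_set (k : ℕ) :
    Nat.card {n : Fin 3 →₀ ℕ | (n.sum fun _ e => e) ≤ k} = (k + 3).choose 3 := by
  have e1 : {n : Fin 3 →₀ ℕ | (n.sum fun _ e => e) ≤ k} ≃ {f : Fin 3 → ℕ // ∑ i, f i ≤ k} :=
    (Finsupp.equivFunOnFinite (α := Fin 3) (M := ℕ)).subtypeEquiv (fun n => by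
      change dsum n ≤ k ↔ _
      rw [dsum_eq_sum]
      rfl)
  have e2 : {f : Fin 3 → ℕ // ∑ i, f i ≤ k} ≃ {g : Fin 4 → ℕ // ∑ i, g i = k} := by
    refine ⟨fun f => ⟨Fin.snoc f.1 (k - ∑ i, f.1 i), ?_⟩,
            fun g => ⟨fun i => g.1 (Fin.castSucc i), ?_⟩, ?_, ?_⟩
    · rw [Fin.sum_univ_castSucc]
      simp only [Fin.snoc_castSucc, Fin.snoc_last]
      have := f.2
      omega
    · show ∑ i : Fin 3, g.1 (Fin.castSucc i) ≤ k
      have := g.2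
      rw [Fin.sum_univ_castSucc] at this
      omega
    · intro f
      ext i
      simp [Fin.snoc_castSucc]
    · intro g
      ext i
      have hsum := g.2
      rw [Fin.sum_univ_castSucc] at hsum
      have hlast : k - ∑ i : Fin 3, g.1 (Fin.castSucc i) = g.1 (Fin.last 3) := by omega
      simp only [hlast]
      exact congrFun (Fin.snoc_init_self g.1) i
  have e3 : {g : Fin 4 → ℕ // ∑ i, g i = k} ≃ {m : Fin 4 →₀ ℕ // (m.sum fun _ e => e) = k} :=
    ((Finsupp.equivFunOnFinite (α := Fin 4) (M := ℕ)).subtypeEquiv (fun m => by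
      rw [Finsupp.sum_fintype _ _ (fun _ => rfl)]
      rfl)).symm
  have e4 : {m : Fin 4 →₀ ℕ // (m.sum fun _ e => e) = k} ≃ Sym (Fin 4) k := by
    refine ⟨fun m => ⟨Finsupp.toMultiset m.1, ?_⟩,
            fun s => ⟨Multiset.toFinsupp s.1, ?_⟩, ?_, ?_⟩
    · rw [Finsupp.card_toMultiset]
      exact m.2
    · show ((Multiset.toFinsupp s.1).sum fun _ => id) = k
      rw [← Finsupp.card_toMultiset, Multiset.toFinsupp_toMultiset]
      exact s.2
    · intro m
      ext : 1
      classical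
      exact Finsupp.toMultiset_toFinsupp m.1
    · intro s
      apply Subtype.ext
      exact Multiset.toFinsupp_toMultiset s.1
  rw [Nat.card_congr (((e1.trans e2).trans e3).trans e4), Nat.card_eq_fintype_card,
    Sym.card_sym_eq_choose]
  have h4 : Fintype.card (Fin 4) + k - 1 = k + 3 := by simp; omega
  rw [h4, ← Nat.choose_symm (Nat.le_add_right k 3), Nat.add_sub_cancel_left]

lemma finrank_rtd (m : ℕ) :
    Module.finrank ℝ (restrictTotalDegree (Fin 3) ℝ m) = (m + 3).choose 3 := by
  rw [Module.finrank_eq_nat_card_basis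
    (show Module.Basis _ ℝ (restrictTotalDegree (Fin 3) ℝ m) from basisRestrictSupport ℝ _)]
  exact card_deg_set m

lemma polyLE3_natCast (k : ℕ) : polyLE3 (k : ℤ) = restrictTotalDegree (Fin 3) ℝ k := by
  rw [polyLE3, if_pos (Int.natCast_nonneg k), Int.toNat_natCast]

lemma C_mem_rtd (c : ℝ) (m : ℕ) : C c ∈ restrictTotalDegree (Fin 3) ℝ m := by
  rw [mem_rtd]
  intro d hd
  rw [show (C c : P3) = monomial 0 c from rfl, support_monomial] at hd
  split at hd
  · simp at hd
  · rw [Finset.mem_singleton] at hd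
    subst hd
    simp [dsum]

lemma pderiv_eq_zero_of_mem_rtd0 {q : P3} (hq : q ∈ restrictTotalDegree (Fin 3) ℝ 0)
    (i : Fin 3) : pderiv i q = 0 := by
  rw [mem_rtd] at hq
  ext m
  rw [coeff_pderiv, coeff_zero]
  have : coeff (m + Finsupp.single i 1) q = 0 := by
    by_contra h
    have := hq _ (mem_support_iff.mpr h)
    rw [dsum_add_single] at this
    omega
  rw [this, mul_zero]

lemma pderiv_mem_polyLE3 {q : P3} {k : ℕ} (i : Fin 3) (hq : q ∈ polyLE3 (k : ℤ)) :
    pderiv i q ∈ polyLE3 ((k : ℤ) - 1) := by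
  rw [polyLE3_natCast] at hq
  cases k with
  | zero =>
    rw [pderiv_eq_zero_of_mem_rtd0 hq i]
    exact Submodule.zero_mem _
  | succ n =>
    have : ((n + 1 : ℕ) : ℤ) - 1 = (n : ℤ) := by push_cast; ring
    rw [this, polyLE3_natCast]
    exact pderiv_mem i hq

lemma Linv_mem_polyLE3 {p : P3} {m : ℤ} (hp : p ∈ polyLE3 m) : Linv p ∈ polyLE3 m := by
  rw [polyLE3] at hp ⊢
  split at hp
  · rw [if_pos ‹_›]
    exact Linv_mem hp
  · rw [if_neg ‹_›]
    rw [Submodule.mem_bot] at hp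
    rw [hp, map_zero]
    exact Submodule.zero_mem _

/-- The map `q ↦ (L⁻¹(∂ᵢ q))ᵢ`. -/
def Phi : P3 →ₗ[ℝ] (Fin 3 → P3) :=
  LinearMap.pi fun i => Linv ∘ₗ (pderiv i : Derivation ℝ P3 P3).toLinearMap

lemma Phi_apply (q : P3) (i : Fin 3) : Phi q i = Linv (pderiv i q) := rfl

end AuxGrad

open AuxGrad

/-- The dimension of the space of triples `(P₁,P₂,P₃) ∈ 𝒫_{k-1}³` whose row-wise
divergence is a gradient of an element of `𝒫_k` is `(k³ + 6k² + 11k)/6 = dim 𝒫_k - 1`. -/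
theorem dim_gradDivTriples (k : ℕ) :
    (Module.finrank ℝ (gradDivTriples k) : ℚ) =
      ((k : ℚ) ^ 3 + 6 * (k : ℚ) ^ 2 + 11 * (k : ℚ)) / 6 ∧
    ((k : ℚ) ^ 3 + 6 * (k : ℚ) ^ 2 + 11 * (k : ℚ)) / 6 =
      (Module.finrank ℝ (polyLE3 (k : ℤ)) : ℚ) - 1 := by
  classical
  haveI : FiniteDimensional ℝ (polyLE3 (k : ℤ)) := by
    rw [polyLE3_natCast]; infer_instance
  let f : polyLE3 (k : ℤ) →ₗ[ℝ] (Fin 3 → P3) := Phi ∘ₗ (polyLE3 (k : ℤ)).subtype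
  have hrange : LinearMap.range f = gradDivTriples k := by
    apply le_antisymm
    · rintro P ⟨⟨q, hq⟩, rfl⟩
      refine ⟨fun i => ?_, q, hq, fun i => ?_⟩
      · exact Linv_mem_polyLE3 (pderiv_mem_polyLE3 i hq)
      · show (∑ j : Fin 3, pderiv j (X j * Linv (pderiv i q))) = pderiv i q
        rw [← Lmap_eq_rowform, Lmap_Linv]
    · rintro P ⟨hP, q, hq, hd⟩
      refine ⟨⟨q, hq⟩, ?_⟩
      funext i
      show Linv (pderiv i q) = P i
      have := hd i
      rw [rowDiv, ← Lmap_eq_rowform] at this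
      rw [← this, Linv_Lmap]
  have hCmem : ∀ c : ℝ, C c ∈ polyLE3 (k : ℤ) := fun c => by
    rw [polyLE3_natCast]; exact C_mem_rtd c k
  set x₀ : polyLE3 (k : ℤ) := ⟨C 1, hCmem 1⟩ with hx₀
  have hker : LinearMap.ker f = Submodule.span ℝ {x₀} := by
    apply le_antisymm
    · rintro ⟨q, hq⟩ hx
      rw [LinearMap.mem_ker] at hx
      have hder : ∀ i, pderiv i q = 0 := by
        intro i
        have h1 : Linv (pderiv i q) = 0 := congrFun hx i
        have := congrArg Lmap h1
        rwa [Lmap_Linv, map_zero] at this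
      have hqC : q = C (coeff 0 q) := eq_C_of_pderiv_eq_zero hder
      rw [Submodule.mem_span_singleton]
      refine ⟨coeff 0 q, ?_⟩
      apply Subtype.ext
      show coeff 0 q • (C 1 : P3) = q
      rw [smul_eq_C_mul, map_one, mul_one]
      exact hqC.symm
    · rw [Submodule.span_le, Set.singleton_subset_iff]
      rw [SetLike.mem_coe, LinearMap.mem_ker]
      funext i
      show Linv (pderiv i (C 1 : P3)) = 0
      rw [pderiv_C, map_zero]
  have hx₀ne : x₀ ≠ 0 := by
    intro h
    have : (C 1 : P3) = 0 := congrArg Subtype.val h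
    rw [map_one] at this
    exact one_ne_zero this
  have hkerrank : Module.finrank ℝ (LinearMap.ker f) = 1 := by
    rw [hker]
    exact finrank_span_singleton hx₀ne
  have hMrank : Module.finrank ℝ (polyLE3 (k : ℤ)) = (k + 3).choose 3 := by
    rw [polyLE3_natCast, finrank_rtd]
  have hkey : Module.finrank ℝ (gradDivTriples k) + 1 = (k + 3).choose 3 := by
    rw [← hrange, ← hkerrank, ← hMrank]
    exact LinearMap.finrank_range_add_finrank_ker f
  have h6 : (6 : ℚ) * ((k + 3).choose 3 : ℚ)
      = ((k : ℚ) + 1) * ((k : ℚ) + 2) * ((k : ℚ) + 3) := by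
    have := six_choose k
    have h := congrArg (fun n : ℕ => (n : ℚ)) this
    push_cast at h
    linarith [h]
  have hcast : (Module.finrank ℝ (gradDivTriples k) : ℚ) + 1 = ((k + 3).choose 3 : ℚ) := by
    exact_mod_cast congrArg (fun n : ℕ => (n : ℚ)) hkey
  have hpoly : ((k : ℚ) + 1) * ((k : ℚ) + 2) * ((k : ℚ) + 3)
      = (k : ℚ) ^ 3 + 6 * (k : ℚ) ^ 2 + 11 * (k : ℚ) + 6 := by ring
  constructor
  · rw [eq_div_iff (by norm_num : (6 : ℚ) ≠ 0)]
    linarith [hcast, h6, hpoly]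
  · rw [hMrank]
    rw [div_eq_iff (by norm_num : (6 : ℚ) ≠ 0)]
    linarith [h6, hpoly]
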